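/- Let S ⊆ ℝ^d be finite with |S| > 3 and let s₀ ∈ S satisfy s₀ ∈ conv(S \ {s₀}) (s₀ is not an extreme point of S). Then there exists an AP-free finite colouring of ℝ^d containing no almost-monochromatic similar copy of (S, s₀). -/

import Mathlib

/-- A similarity of `ℝ^d`: a map scaling all distances by some ratio `r > 0`. -/
def IsSim {d : ℕ} (f : EuclideanSpace ℝ (Fin d) → EuclideanSpace ℝ (Fin d)) : Prop :=
  ∃ r : ℝ, 0 < r ∧ ∀ x y, dist (f x) (f y) = r * dist x y

/-- A colouring of `ℝ^d` is AP-free if no infinite arithmetic progression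
`{a + n • v : n ∈ ℕ}` with `v ≠ 0` is monochromatic. -/
def APFree {d k : ℕ} (φ : EuclideanSpace ℝ (Fin d) → Fin k) : Prop :=
  ¬ ∃ (a v : EuclideanSpace ℝ (Fin d)) (c : Fin k), v ≠ 0 ∧
      ∀ n : ℕ, φ (a + (n : ℝ) • v) = c

/-- The pair `(S, s₀)` is almost-monochromatic under `φ`. -/
def AlmostMono {X : Type*} {k : ℕ} (φ : X → Fin k) (S : Set X) (s₀ : X) : Prop :=
  (∃ c, ∀ x ∈ S \ {s₀}, φ x = c) ∧ ¬ ∃ c, ∀ x ∈ S, φ x = c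

set_option maxHeartbeats 1000000

section AUX

lemma sim_exists_affine {d : ℕ} {f : EuclideanSpace ℝ (Fin d) → EuclideanSpace ℝ (Fin d)}
    (hf : IsSim f) : ∃ F : EuclideanSpace ℝ (Fin d) →ᵃ[ℝ] EuclideanSpace ℝ (Fin d), ⇑F = f := by
  obtain ⟨r, hr, hd⟩ := hf
  set g : EuclideanSpace ℝ (Fin d) → EuclideanSpace ℝ (Fin d) := fun x => r⁻¹ • f x with hg
  have hiso : Isometry g := by
    apply Isometry.of_dist_eq
    intro x y
    rw [hg]
    simp only [dist_smul₀, hd, norm_inv]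
    rw [Real.norm_of_nonneg hr.le]
    field_simp
  set G := hiso.affineIsometryOfStrictConvexSpace with hG
  have hGg : ⇑G = g := hiso.coe_affineIsometryOfStrictConvexSpace
  refine ⟨(AffineMap.homothety (0 : EuclideanSpace ℝ (Fin d)) r).comp G.toAffineMap, ?_⟩
  funext x
  have : (G.toAffineMap : _ → _) x = g x := by rw [← hGg]; rfl
  simp only [AffineMap.comp_apply, this, AffineMap.homothety_apply, hg]
  simp [smul_smul, mul_inv_cancel₀ hr.ne']

lemma sim_image_convexHull {d : ℕ} {f : EuclideanSpace ℝ (Fin d) → EuclideanSpace ℝ (Fin d)}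
    (hf : IsSim f) (P : Set (EuclideanSpace ℝ (Fin d))) {z : EuclideanSpace ℝ (Fin d)}
    (hz : z ∈ convexHull ℝ P) : f z ∈ convexHull ℝ (f '' P) := by
  obtain ⟨F, hF⟩ := sim_exists_affine hf
  rw [← hF, ← AffineMap.image_convexHull]
  exact Set.mem_image_of_mem _ hz

lemma sim_injective {d : ℕ} {f : EuclideanSpace ℝ (Fin d) → EuclideanSpace ℝ (Fin d)}
    (hf : IsSim f) : Function.Injective f := by
  obtain ⟨r, hr, hd⟩ := hf
  intro x y hxy
  have := hd x y
  rw [hxy, dist_self] at this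
  have := (mul_eq_zero.mp this.symm).resolve_left hr.ne'
  exact dist_eq_zero.mp this


open Finset in
noncomputable def Mn {d : ℕ} [Nonempty (Fin d)] (x : EuclideanSpace ℝ (Fin d)) : ℝ :=
  Finset.univ.sup' Finset.univ_nonempty fun i => |x i|

set_option linter.unusedSectionVars false
section Mlemmas
variable {d : ℕ} [Nonempty (Fin d)]

lemma coord_le_Mn (x : EuclideanSpace ℝ (Fin d)) (i : Fin d) : |x i| ≤ Mn x := by
  unfold Mn
  exact Finset.le_sup' (fun i => |x i|) (Finset.mem_univ i)

lemma Mn_le (x : EuclideanSpace ℝ (Fin d)) {c : ℝ} (h : ∀ i, |x i| ≤ c) : Mn x ≤ c := by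
  unfold Mn
  exact Finset.sup'_le _ _ fun i _ => h i

lemma Mn_lt (x : EuclideanSpace ℝ (Fin d)) {c : ℝ} (h : ∀ i, |x i| < c) : Mn x < c := by
  unfold Mn
  exact (Finset.sup'_lt_iff _).mpr fun i _ => h i

lemma Mn_nonneg (x : EuclideanSpace ℝ (Fin d)) : 0 ≤ Mn x :=
  le_trans (abs_nonneg _) (coord_le_Mn x (Classical.arbitrary _))

lemma Mn_exists (x : EuclideanSpace ℝ (Fin d)) : ∃ i, Mn x = |x i| := by
  unfold Mn
  obtain ⟨i, -, h⟩ := Finset.exists_mem_eq_sup' (Finset.univ_nonempty (α := Fin d)) fun i => |x i|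
  exact ⟨i, h⟩

lemma Mn_pos {x : EuclideanSpace ℝ (Fin d)} (hx : x ≠ 0) : 0 < Mn x := by
  have : ∃ i, x i ≠ 0 := by
    by_contra h
    push_neg at h
    exact hx (by ext i; simp [h i])
  obtain ⟨i, hi⟩ := this
  exact lt_of_lt_of_le (abs_pos.mpr hi) (coord_le_Mn x i)

lemma coord_le_norm (x : EuclideanSpace ℝ (Fin d)) (i : Fin d) : |x i| ≤ ‖x‖ := by
  rw [EuclideanSpace.norm_eq]
  have h1 : |x i| = Real.sqrt (|x i| ^ 2) := by
    rw [Real.sqrt_sq_eq_abs, abs_abs]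
  rw [h1]
  apply Real.sqrt_le_sqrt
  have := Finset.single_le_sum (f := fun j => ‖x j‖ ^ 2) (fun j _ => sq_nonneg _)
    (Finset.mem_univ i)
  simpa [Real.norm_eq_abs] using this

lemma Mn_le_norm (x : EuclideanSpace ℝ (Fin d)) : Mn x ≤ ‖x‖ :=
  Mn_le x fun i => coord_le_norm x i

lemma norm_le_sqrtd_Mn (x : EuclideanSpace ℝ (Fin d)) :
    ‖x‖ ≤ Real.sqrt d * Mn x := by
  rw [EuclideanSpace.norm_eq]
  have h1 : ∑ i, ‖x i‖ ^ 2 ≤ (d : ℝ) * (Mn x) ^ 2 := by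
    calc ∑ i, ‖x i‖ ^ 2 ≤ ∑ _i : Fin d, (Mn x) ^ 2 := by
          apply Finset.sum_le_sum
          intro i _
          rw [Real.norm_eq_abs]
          exact pow_le_pow_left₀ (abs_nonneg _) (coord_le_Mn x i) 2
      _ = (d : ℝ) * (Mn x) ^ 2 := by simp [mul_comm]
  calc Real.sqrt (∑ i, ‖x i‖ ^ 2) ≤ Real.sqrt ((d : ℝ) * (Mn x) ^ 2) := Real.sqrt_le_sqrt h1
    _ = Real.sqrt d * Mn x := by
        rw [Real.sqrt_mul (Nat.cast_nonneg d), Real.sqrt_sq (Mn_nonneg x)]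

lemma Mn_add_le (x y : EuclideanSpace ℝ (Fin d)) : Mn (x + y) ≤ Mn x + Mn y := by
  apply Mn_le
  intro i
  have : (x + y) i = x i + y i := rfl
  rw [this]
  exact le_trans (abs_add_le _ _) (add_le_add (coord_le_Mn x i) (coord_le_Mn y i))

lemma Mn_sub_le (x y : EuclideanSpace ℝ (Fin d)) : Mn x - Mn y ≤ ‖x - y‖ := by
  have h1 : Mn x ≤ Mn y + Mn (x - y) := by
    have := Mn_add_le y (x - y)
    simpa using this
  have h2 : Mn (x - y) ≤ ‖x - y‖ := Mn_le_norm _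
  linarith

end Mlemmas


noncomputable section

variable {d : ℕ} [Nonempty (Fin d)]

def shellIdx (b : ℝ) (x : EuclideanSpace ℝ (Fin d)) : ℕ :=
  (⌊Real.logb b (Mn x)⌋).toNat

lemma shell_mem {b : ℝ} (hb : 1 < b) {x : EuclideanSpace ℝ (Fin d)} (hx : 1 ≤ Mn x) :
    b ^ shellIdx b x ≤ Mn x ∧ Mn x < b ^ (shellIdx b x + 1) := by
  have hM : 0 < Mn x := lt_of_lt_of_le one_pos hx
  set l := Real.logb b (Mn x) with hl
  have hl0 : 0 ≤ l := Real.logb_nonneg hb hx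
  have htn : ((shellIdx b x : ℕ) : ℝ) = (⌊l⌋ : ℝ) := by
    rw [shellIdx]
    norm_cast
    exact Int.toNat_of_nonneg (Int.floor_nonneg.mpr hl0)
  constructor
  · have h1 : (b : ℝ) ^ ((shellIdx b x : ℕ) : ℝ) ≤ b ^ l := by
      apply (Real.rpow_le_rpow_left_iff hb).mpr
      rw [htn]
      exact Int.floor_le l
    rw [Real.rpow_natCast] at h1
    rwa [Real.rpow_logb (lt_trans one_pos hb) hb.ne' hM] at h1
  · have h1 : (b : ℝ) ^ l < b ^ (((shellIdx b x + 1 : ℕ)) : ℝ) := by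
      apply (Real.rpow_lt_rpow_left_iff hb).mpr
      push_cast
      rw [htn]
      exact Int.lt_floor_add_one l
    rw [Real.rpow_natCast] at h1
    rwa [Real.rpow_logb (lt_trans one_pos hb) hb.ne' hM] at h1

lemma shell_eq {b : ℝ} (hb : 1 < b) {x : EuclideanSpace ℝ (Fin d)} {j : ℕ}
    (h1 : b ^ j ≤ Mn x) (h2 : Mn x < b ^ (j + 1)) : shellIdx b x = j := by
  have hb1 : (1 : ℝ) ≤ b := hb.le
  have hx : 1 ≤ Mn x := le_trans (one_le_pow₀ hb1) h1
  obtain ⟨g1, g2⟩ := shell_mem hb hx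
  by_contra hne
  rcases Nat.lt_or_ge (shellIdx b x) j with h | h
  · have : (b : ℝ) ^ (shellIdx b x + 1) ≤ b ^ j := pow_le_pow_right₀ hb1 h
    linarith
  · have hj : j + 1 ≤ shellIdx b x := by omega
    have : (b : ℝ) ^ (j + 1) ≤ b ^ shellIdx b x := pow_le_pow_right₀ hb1 hj
    linarith

def imax (x : EuclideanSpace ℝ (Fin d)) : Fin d :=
  (Finset.univ.filter fun i => |x i| = Mn x).min' (by
    obtain ⟨i, hi⟩ := Mn_exists x
    exact ⟨i, Finset.mem_filter.mpr ⟨Finset.mem_univ i, hi.symm⟩⟩)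

lemma imax_spec (x : EuclideanSpace ℝ (Fin d)) :
    |x (imax x)| = Mn x ∧ ∀ l, l < imax x → |x l| < Mn x := by
  constructor
  · have := Finset.min'_mem (Finset.univ.filter fun i => |x i| = Mn x) (by
      obtain ⟨i, hi⟩ := Mn_exists x
      exact ⟨i, Finset.mem_filter.mpr ⟨Finset.mem_univ i, hi.symm⟩⟩)
    rw [imax]
    exact (Finset.mem_filter.mp this).2
  · intro l hl
    rcases lt_or_eq_of_le (coord_le_Mn x l) with h | h
    · exact h
    · exfalso
      have hmem : l ∈ Finset.univ.filter fun i => |x i| = Mn x :=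
        Finset.mem_filter.mpr ⟨Finset.mem_univ l, h⟩
      have := Finset.min'_le _ l hmem
      rw [imax] at hl
      exact absurd this (not_le.mpr hl)

def sgn (x : EuclideanSpace ℝ (Fin d)) : Bool := decide (0 < x (imax x))

def sg (s : Bool) : ℝ := if s then 1 else -1

lemma sg_mul_eq_abs {x : EuclideanSpace ℝ (Fin d)} (hx : x (imax x) ≠ 0) :
    sg (sgn x) * x (imax x) = |x (imax x)| := by
  rw [sgn, sg]
  rcases lt_trichotomy 0 (x (imax x)) with h | h | h
  · simp [h, abs_of_pos h]
  · exact absurd h.symm hx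
  · simp [not_lt.mpr h.le, abs_of_neg h]

def acoef (β : ℝ) (x : EuclideanSpace ℝ (Fin d)) (l : Fin d) : ℤ :=
  ⌊x l / (β * Mn x)⌋

def colour (b β : ℝ) (Q A : ℕ) (x : EuclideanSpace ℝ (Fin d)) :
    Option (ZMod Q × Fin d × Bool × (Fin d → ZMod A)) :=
  if Mn x < 1 then none
  else some ((shellIdx b x : ZMod Q), imax x, sgn x, fun l => ((acoef β x l : ZMod A)))

end

noncomputable section CellSec
variable {d : ℕ} [Nonempty (Fin d)]

lemma combo_le {u v p q p' q' : ℝ} (hu : 0 ≤ u) (hv : 0 ≤ v)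
    (h1 : p ≤ p') (h2 : q ≤ q') : u*p + v*q ≤ u*p' + v*q' :=
  add_le_add (mul_le_mul_of_nonneg_left h1 hu) (mul_le_mul_of_nonneg_left h2 hv)

lemma combo_lt {u v p q p' q' : ℝ} (hu : 0 ≤ u) (hv : 0 ≤ v) (huv : u + v = 1)
    (h1 : p < p') (h2 : q < q') : u*p + v*q < u*p' + v*q' := by
  rcases eq_or_lt_of_le hu with h | h
  · have hv1 : v = 1 := by linarith
    rw [← h, hv1]; simpa using h2
  · have l1 : u*p < u*p' := by exact (mul_lt_mul_iff_right₀ h).mpr h1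
    have l2 : v*q ≤ v*q' := mul_le_mul_of_nonneg_left h2.le hv
    linarith

def Cell (b β : ℝ) (j : ℕ) (i : Fin d) (s : Bool) (a : Fin d → ℤ) :
    Set (EuclideanSpace ℝ (Fin d)) :=
  {x | b ^ j ≤ sg s * x i ∧
       (∀ l, |x l| ≤ sg s * x i) ∧
       (∀ l, l < i → |x l| < sg s * x i) ∧
       (∀ l, |x l| < b ^ (j+1)) ∧
       (∀ l, β * a l * (sg s * x i) ≤ x l ∧ x l < β * (a l + 1) * (sg s * x i))}

lemma cell_convex (b β : ℝ) (j : ℕ) (i : Fin d) (s : Bool) (a : Fin d → ℤ) :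
    Convex ℝ (Cell b β j i s a) := by
  intro x hx y hy u v hu hv huv
  obtain ⟨h1x, h2x, h3x, h4x, h5x⟩ := hx
  obtain ⟨h1y, h2y, h3y, h4y, h5y⟩ := hy
  have hco : ∀ l : Fin d, (u • x + v • y) l = u * x l + v * y l := fun l => rfl
  have habs : ∀ l : Fin d, |(u • x + v • y) l| ≤ u * |x l| + v * |y l| := by
    intro l
    rw [hco l]
    calc |u * x l + v * y l| ≤ |u * x l| + |v * y l| := abs_add_le _ _
      _ = u * |x l| + v * |y l| := by
          rw [abs_mul, abs_mul, abs_of_nonneg hu, abs_of_nonneg hv]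
  have hsg : sg s * (u • x + v • y) i = u * (sg s * x i) + v * (sg s * y i) := by
    rw [hco i]; ring
  refine ⟨?_, ?_, ?_, ?_, ?_⟩
  · rw [hsg]
    calc (b:ℝ) ^ j = u * b ^ j + v * b ^ j := by rw [← add_mul, huv]; ring
      _ ≤ _ := combo_le hu hv h1x h1y
  · intro l
    rw [hsg]
    exact le_trans (habs l) (combo_le hu hv (h2x l) (h2y l))
  · intro l hl
    rw [hsg]
    exact lt_of_le_of_lt (habs l) (combo_lt hu hv huv (h3x l hl) (h3y l hl))
  · intro l
    calc |(u • x + v • y) l| ≤ u * |x l| + v * |y l| := habs l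
      _ < u * b^(j+1) + v * b^(j+1) := combo_lt hu hv huv (h4x l) (h4y l)
      _ = b^(j+1) := by rw [← add_mul, huv]; ring
  · intro l
    constructor
    · have : β * a l * (sg s * (u • x + v • y) i)
          = u * (β * a l * (sg s * x i)) + v * (β * a l * (sg s * y i)) := by
        rw [hsg]; ring
      rw [this, hco l]
      exact combo_le hu hv (h5x l).1 (h5y l).1
    · have : β * (a l + 1) * (sg s * (u • x + v • y) i)
          = u * (β * (a l + 1) * (sg s * x i)) + v * (β * (a l + 1) * (sg s * y i)) := by
        rw [hsg]; ring
      rw [this, hco l]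
      exact combo_lt hu hv huv (h5x l).2 (h5y l).2

lemma cell_canon {b β : ℝ} (hb : 1 < b) (hβ : 0 < β) {j : ℕ} {i : Fin d} {s : Bool}
    {a : Fin d → ℤ} {x : EuclideanSpace ℝ (Fin d)} (hx : x ∈ Cell b β j i s a) :
    Mn x = sg s * x i ∧ 1 ≤ Mn x ∧ shellIdx b x = j ∧ imax x = i ∧ sgn x = s ∧
      (∀ l, acoef β x l = a l) := by
  obtain ⟨h1, h2, h3, h4, h5⟩ := hx
  have hbj : (1:ℝ) ≤ b ^ j := one_le_pow₀ hb.le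
  have hpos : 0 < sg s * x i := lt_of_lt_of_le (lt_of_lt_of_le one_pos hbj) h1
  have hsgval : (s = true ∧ sg s = 1) ∨ (s = false ∧ sg s = -1) := by
    cases s
    · right; exact ⟨rfl, rfl⟩
    · left; exact ⟨rfl, rfl⟩
  have habsi : |x i| = sg s * x i := by
    rcases hsgval with ⟨-, hs⟩ | ⟨-, hs⟩
    · rw [hs] at hpos ⊢
      rw [abs_of_pos (by linarith : 0 < x i)]; ring
    · rw [hs] at hpos ⊢
      rw [abs_of_neg (by linarith : x i < 0)]; ring
  have hM : Mn x = sg s * x i := by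
    apply le_antisymm (Mn_le x h2)
    rw [← habsi]; exact coord_le_Mn x i
  have hM1 : 1 ≤ Mn x := by rw [hM]; linarith
  have hshell : shellIdx b x = j := by
    apply shell_eq hb
    · rw [hM]; exact h1
    · exact Mn_lt x h4
  have himax : imax x = i := by
    have hifil : i ∈ Finset.univ.filter fun l => |x l| = Mn x :=
      Finset.mem_filter.mpr ⟨Finset.mem_univ i, by rw [habsi, hM]⟩
    have hle : imax x ≤ i := Finset.min'_le _ i hifil
    rcases lt_or_eq_of_le hle with hlt | heq
    · exfalso
      have hmem := Finset.min'_mem (Finset.univ.filter fun l => |x l| = Mn x) (by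
        obtain ⟨i', hi'⟩ := Mn_exists x
        exact ⟨i', Finset.mem_filter.mpr ⟨Finset.mem_univ i', hi'.symm⟩⟩)
      rw [← imax] at hmem
      have heq2 := (Finset.mem_filter.mp hmem).2
      have hcon := h3 (imax x) hlt
      rw [heq2, hM] at hcon
      exact lt_irrefl _ hcon
    · exact heq
  have hsgn : sgn x = s := by
    rw [sgn, himax]
    rcases hsgval with ⟨hst, hs⟩ | ⟨hst, hs⟩
    · rw [hs] at hpos
      rw [hst]
      exact decide_eq_true (by linarith : 0 < x i)
    · rw [hs] at hpos
      rw [hst]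
      exact decide_eq_false (not_lt.mpr (by linarith : x i ≤ 0))
  refine ⟨hM, hM1, hshell, himax, hsgn, ?_⟩
  intro l
  have hMpos : 0 < Mn x := lt_of_lt_of_le one_pos hM1
  have hβM : 0 < β * Mn x := by positivity
  rw [acoef, Int.floor_eq_iff]
  constructor
  · rw [le_div_iff₀ hβM, hM]
    calc (a l : ℝ) * (β * (sg s * x i)) = β * a l * (sg s * x i) := by ring
      _ ≤ x l := (h5 l).1
  · rw [div_lt_iff₀ hβM, hM]
    calc x l < β * (a l + 1) * (sg s * x i) := (h5 l).2
      _ = ((a l : ℝ) + 1) * (β * (sg s * x i)) := by ring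

lemma canon_cell {b β : ℝ} (hb : 1 < b) (hβ : 0 < β) {x : EuclideanSpace ℝ (Fin d)}
    (hx : 1 ≤ Mn x) :
    x ∈ Cell b β (shellIdx b x) (imax x) (sgn x) (acoef β x) := by
  have hMpos : 0 < Mn x := lt_of_lt_of_le one_pos hx
  have hine : x (imax x) ≠ 0 := by
    intro h0
    have := (imax_spec x).1
    rw [h0] at this
    simp at this
    rw [← this] at hx
    linarith
  have hsg : sg (sgn x) * x (imax x) = Mn x := by
    rw [sg_mul_eq_abs hine, (imax_spec x).1]
  obtain ⟨hs1, hs2⟩ := shell_mem hb hx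
  refine ⟨?_, ?_, ?_, ?_, ?_⟩
  · rw [hsg]; exact hs1
  · intro l; rw [hsg]; exact coord_le_Mn x l
  · intro l hl; rw [hsg]; exact (imax_spec x).2 l hl
  · intro l; exact lt_of_le_of_lt (coord_le_Mn x l) hs2
  · intro l
    have hβM : 0 < β * Mn x := by positivity
    constructor
    · rw [hsg]
      calc β * (acoef β x l) * Mn x = (acoef β x l : ℝ) * (β * Mn x) := by ring
        _ ≤ x l / (β * Mn x) * (β * Mn x) := by
            apply mul_le_mul_of_nonneg_right _ hβM.le
            exact Int.floor_le _
        _ = x l := by field_simp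
    · rw [hsg]
      calc x l = x l / (β * Mn x) * (β * Mn x) := by field_simp
        _ < ((acoef β x l : ℝ) + 1) * (β * Mn x) := by
            apply mul_lt_mul_of_pos_right _ hβM
            exact Int.lt_floor_add_one _
        _ = β * ((acoef β x l) + 1) * Mn x := by ring

end CellSec

noncomputable section ColourSec
variable {d : ℕ} [Nonempty (Fin d)]

lemma int_eq_of_cast_zmod {A : ℕ} {a c : ℤ} (h : (a : ZMod A) = (c : ZMod A))
    (hlt : |a - c| < (A : ℤ)) : a = c := by
  have hdvd : (A : ℤ) ∣ c - a := ((ZMod.intCast_eq_intCast_iff _ _ _).mp h).dvd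
  obtain ⟨k, hk⟩ := hdvd
  rcases eq_or_ne k 0 with rfl | hk0
  · simp at hk; linarith [hk]
  · exfalso
    have h1 : (1 : ℤ) ≤ |k| := Int.one_le_abs (by exact_mod_cast hk0)
    have h2 : |c - a| = (A : ℤ) * |k| := by rw [hk, abs_mul, abs_of_nonneg (by positivity : (0:ℤ) ≤ (A:ℤ))]
    have h3 : (A : ℤ) * 1 ≤ (A:ℤ) * |k| := by
      apply mul_le_mul_of_nonneg_left h1 (by positivity)
    rw [abs_sub_comm] at hlt
    omega

lemma acoef_abs_le {β : ℝ} (hβ : 0 < β) {x : EuclideanSpace ℝ (Fin d)}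
    (hx : 1 ≤ Mn x) (l : Fin d) : |(acoef β x l : ℝ)| ≤ 1/β + 1 := by
  have hMpos : 0 < Mn x := lt_of_lt_of_le one_pos hx
  have hβM : 0 < β * Mn x := by positivity
  set t := x l / (β * Mn x) with ht
  have htabs : |t| ≤ 1/β := by
    rw [ht, abs_div, abs_of_pos hβM, div_le_div_iff₀ hβM hβ]
    calc |x l| * β ≤ Mn x * β := by
          apply mul_le_mul_of_nonneg_right (coord_le_Mn x l) hβ.le
      _ = 1 * (β * Mn x) := by ring
  have h1 : (acoef β x l : ℝ) ≤ t := Int.floor_le t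
  have h2 : t - 1 < (acoef β x l : ℝ) := Int.sub_one_lt_floor t
  rw [abs_le]
  rw [abs_le] at htabs
  constructor <;> [linarith; linarith]

lemma colour_eq_none_iff {b β : ℝ} {Q A : ℕ} {x : EuclideanSpace ℝ (Fin d)} :
    colour b β Q A x = none ↔ Mn x < 1 := by
  rw [colour]
  by_cases h : Mn x < 1 <;> simp [h]

lemma colour_same_shell_data {b β : ℝ} {Q A : ℕ} (hb : 1 < b) (hβ : 0 < β)
    (hA : 2/β + 2 < (A:ℝ)) {x y : EuclideanSpace ℝ (Fin d)}
    (hx1 : 1 ≤ Mn x) (hy1 : 1 ≤ Mn y) (hsh : shellIdx b x = shellIdx b y)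
    (hc : colour b β Q A x = colour b β Q A y) :
    imax x = imax y ∧ sgn x = sgn y ∧ ∀ l, acoef β x l = acoef β y l := by
  rw [colour, colour, if_neg (not_lt.mpr hx1), if_neg (not_lt.mpr hy1)] at hc
  have hc' := Option.some_injective _ hc
  obtain ⟨-, h2, h3, h4⟩ : ((shellIdx b x : ZMod Q) = (shellIdx b y : ZMod Q)) ∧
      imax x = imax y ∧ sgn x = sgn y ∧
      (fun l => ((acoef β x l : ZMod A))) = (fun l => ((acoef β y l : ZMod A))) := by
    rw [Prod.ext_iff, Prod.ext_iff, Prod.ext_iff] at hc'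
    exact ⟨hc'.1, hc'.2.1, hc'.2.2.1, hc'.2.2.2⟩
  refine ⟨h2, h3, fun l => ?_⟩
  have hl := congrFun h4 l
  apply int_eq_of_cast_zmod hl
  have b1 := acoef_abs_le hβ hx1 l
  have b2 := acoef_abs_le hβ hy1 l
  have : |(acoef β x l : ℝ) - (acoef β y l : ℝ)| ≤ 2/β + 2 := by
    calc |(acoef β x l : ℝ) - (acoef β y l : ℝ)| ≤ |(acoef β x l : ℝ)| + |(acoef β y l : ℝ)| :=
        abs_sub _ _
      _ ≤ (1/β + 1) + (1/β + 1) := add_le_add b1 b2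
      _ = 2/β + 2 := by ring
  have hfin : |(acoef β x l : ℝ) - (acoef β y l : ℝ)| < (A : ℝ) := lt_of_le_of_lt this hA
  have h5 : ((|acoef β x l - acoef β y l| : ℤ) : ℝ) < ((A:ℤ) : ℝ) := by
    push_cast
    rw [← Int.cast_sub] at hfin
    rw [← Int.cast_abs] at hfin
    exact_mod_cast hfin
  exact_mod_cast h5

lemma central_convex : Convex ℝ {x : EuclideanSpace ℝ (Fin d) | Mn x < 1} := by
  intro x hx y hy u v hu hv huv
  simp only [Set.mem_setOf_eq] at hx hy ⊢
  apply Mn_lt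
  intro l
  have hco : (u • x + v • y) l = u * x l + v * y l := rfl
  rw [hco]
  calc |u * x l + v * y l| ≤ u * |x l| + v * |y l| := by
        calc |u * x l + v * y l| ≤ |u * x l| + |v * y l| := abs_add_le _ _
          _ = u * |x l| + v * |y l| := by rw [abs_mul, abs_mul, abs_of_nonneg hu, abs_of_nonneg hv]
    _ < u * 1 + v * 1 := combo_lt hu hv huv
        (lt_of_le_of_lt (coord_le_Mn x l) hx) (lt_of_le_of_lt (coord_le_Mn y l) hy)
    _ = 1 := by rw [mul_one, mul_one, huv]

lemma Mn_neg (x : EuclideanSpace ℝ (Fin d)) : Mn (-x) = Mn x := by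
  apply le_antisymm
  · apply Mn_le; intro i
    have : (-x) i = -(x i) := rfl
    rw [this, abs_neg]; exact coord_le_Mn x i
  · apply Mn_le; intro i
    have : |x i| = |(-x) i| := by
      have : (-x) i = -(x i) := rfl
      rw [this, abs_neg]
    rw [this]; exact coord_le_Mn (-x) i

lemma Mn_unbounded {a v : EuclideanSpace ℝ (Fin d)} (hv : v ≠ 0) (X : ℝ) :
    ∃ n : ℕ, X ≤ Mn (a + (n : ℝ) • v) := by
  have hMv : 0 < Mn v := Mn_pos hv
  obtain ⟨n, hn⟩ := exists_nat_ge ((X + Mn a) / Mn v)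
  refine ⟨n, ?_⟩
  have h1 : X + Mn a ≤ n * Mn v := by
    rw [div_le_iff₀ hMv] at hn
    linarith
  obtain ⟨i₀, hi₀⟩ := Mn_exists v
  have h2 : (n : ℝ) * Mn v ≤ Mn ((n:ℝ) • v) := by
    rw [hi₀]
    have happ : ((n:ℝ) • v) i₀ = (n:ℝ) * v i₀ := rfl
    calc (n : ℝ) * |v i₀| = |(n:ℝ) * v i₀| := by
          rw [abs_mul, abs_of_nonneg (show (0:ℝ) ≤ (n:ℝ) from Nat.cast_nonneg n)]
      _ = |((n:ℝ) • v) i₀| := by rw [happ]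
      _ ≤ Mn ((n:ℝ) • v) := coord_le_Mn _ i₀
  have h3 : Mn ((n:ℝ) • v) ≤ Mn (a + (n:ℝ) • v) + Mn a := by
    have := Mn_add_le (a + (n:ℝ) • v) (-a)
    simp only [add_neg_cancel_comm] at this
    rwa [Mn_neg] at this
  linarith

lemma crossing {b β : ℝ} (hb : 1 < b) (hbβ : b = 1 + β) {a v : EuclideanSpace ℝ (Fin d)}
    (hv : v ≠ 0) (L : ℕ) (hL1 : Mn a < b ^ (L+1)) (hLv : Mn v ≤ β * b ^ (L+1)) :
    ∃ n : ℕ, shellIdx b (a + (n : ℝ) • v) = L + 1 ∧ 1 ≤ Mn (a + (n : ℝ) • v) := by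
  classical
  have hex : ∃ n : ℕ, b ^ (L+1) ≤ Mn (a + (n : ℝ) • v) := Mn_unbounded hv _
  set n := Nat.find hex with hn
  have hspec : b ^ (L+1) ≤ Mn (a + (n : ℝ) • v) := Nat.find_spec hex
  have hn0 : n ≠ 0 := by
    intro h0
    rw [h0] at hspec
    simp only [Nat.cast_zero, zero_smul, add_zero] at hspec
    linarith
  obtain ⟨m, hm⟩ := Nat.exists_eq_succ_of_ne_zero hn0
  have hmin : ¬ b ^ (L+1) ≤ Mn (a + (m : ℝ) • v) := Nat.find_min hex (by omega)
  push_neg at hmin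
  have hstep : Mn (a + (n : ℝ) • v) ≤ Mn (a + (m : ℝ) • v) + Mn v := by
    have hrw : a + (n : ℝ) • v = (a + (m : ℝ) • v) + v := by
      rw [hm]
      push_cast
      rw [add_smul, one_smul, add_assoc]
    rw [hrw]
    exact Mn_add_le _ _
  have hup : Mn (a + (n : ℝ) • v) < b ^ (L+2) := by
    have : (b : ℝ) ^ (L+2) = b ^ (L+1) + β * b ^ (L+1) := by
      have h2 : (b : ℝ) ^ (L+2) = b ^ (L+1) * b := by ring
      rw [h2]
      nth_rewrite 2 [hbβ]
      ring
    rw [this]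
    linarith
  refine ⟨n, shell_eq hb hspec hup, ?_⟩
  exact le_trans (one_le_pow₀ hb.le) hspec

lemma apfree_colour {b β : ℝ} {Q A : ℕ} (hb : 1 < b) (hbβ : b = 1 + β) (hQ : 2 ≤ Q)
    {a v : EuclideanSpace ℝ (Fin d)} (hv : v ≠ 0)
    {c : Option (ZMod Q × Fin d × Bool × (Fin d → ZMod A))}
    (hmono : ∀ n : ℕ, colour b β Q A (a + (n : ℝ) • v) = c) : False := by
  have hβ : 0 < β := by
    have : 1 < 1 + β := by rw [← hbβ]; exact hb
    linarith
  obtain ⟨L0, hL0⟩ := pow_unbounded_of_one_lt (max (Mn a) (Mn v / β)) hb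
  set L : ℕ := L0 with hL
  have hL1 : Mn a < b ^ (L+1) := by
    calc Mn a ≤ max (Mn a) (Mn v / β) := le_max_left _ _
      _ < b ^ L := hL0
      _ ≤ b ^ (L+1) := pow_le_pow_right₀ hb.le (by omega)
  have hLv : Mn v ≤ β * b ^ (L+1) := by
    have h1 : Mn v / β < b ^ L := lt_of_le_of_lt (le_max_right _ _) hL0
    rw [div_lt_iff₀ hβ] at h1
    calc Mn v ≤ b ^ L * β := h1.le
      _ ≤ b ^ (L+1) * β := by
          apply mul_le_mul_of_nonneg_right (pow_le_pow_right₀ hb.le (by omega)) hβ.le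
      _ = β * b ^ (L+1) := by ring
  obtain ⟨n₁, hs₁, hM₁⟩ := crossing hb hbβ hv L hL1 hLv
  have hL1' : Mn a < b ^ (L+2) := lt_of_lt_of_le hL1 (pow_le_pow_right₀ hb.le (by omega))
  have hLv' : Mn v ≤ β * b ^ (L+2) := by
    calc Mn v ≤ β * b ^ (L+1) := hLv
      _ ≤ β * b ^ (L+2) := by
          apply mul_le_mul_of_nonneg_left (pow_le_pow_right₀ hb.le (by omega)) hβ.le
  obtain ⟨n₂, hs₂, hM₂⟩ := crossing hb hbβ hv (L+1) hL1' hLv'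
  have hc₁ := hmono n₁
  have hc₂ := hmono n₂
  rw [colour, if_neg (not_lt.mpr hM₁), hs₁] at hc₁
  rw [colour, if_neg (not_lt.mpr hM₂), hs₂] at hc₂
  rw [← hc₂] at hc₁
  have hfst : ((L + 1 : ℕ) : ZMod Q) = ((L + 2 : ℕ) : ZMod Q) := by
    have := Option.some_injective _ hc₁
    exact congrArg Prod.fst this
  have hmod : (L + 1) % Q = (L + 2) % Q := (ZMod.natCast_eq_natCast_iff _ _ _).mp hfst
  have hdvd : (Q:ℤ) ∣ ((L+2 : ℕ) : ℤ) - ((L+1 : ℕ) : ℤ) := Nat.modEq_iff_dvd.mp hmod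
  have : (Q:ℤ) ∣ 1 := by
    have h1 : ((L+2 : ℕ) : ℤ) - ((L+1 : ℕ) : ℤ) = 1 := by push_cast; ring
    rwa [h1] at hdvd
  have := Int.le_of_dvd one_pos this
  omega

end ColourSec

noncomputable section KillSec
variable {d : ℕ} [Nonempty (Fin d)]

lemma cell_diam {b β : ℝ} (hb : 1 < b) (hβ : 0 < β) (hβ2 : β ≤ 1/2) (hbβ : b = 1 + β)
    {j : ℕ} {i : Fin d} {s : Bool} {a : Fin d → ℤ} {x y : EuclideanSpace ℝ (Fin d)}
    (hx : x ∈ Cell b β j i s a) (hy : y ∈ Cell b β j i s a) :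
    Mn (x - y) ≤ 3 * β * b ^ j := by
  obtain ⟨hMx, hx1, hshx, himx, hsgx, hax⟩ := cell_canon hb hβ hx
  obtain ⟨hMy, hy1, hshy, himy, hsgy, hay⟩ := cell_canon hb hβ hy
  obtain ⟨hxlo, hxhi⟩ := shell_mem hb hx1
  obtain ⟨hylo, hyhi⟩ := shell_mem hb hy1
  rw [hshx] at hxlo hxhi
  rw [hshy] at hylo hyhi
  have hbj1 : (b:ℝ) ^ (j+1) = (1 + β) * b ^ j := by rw [pow_succ]; nth_rewrite 2 [hbβ]; ring
  have hbjpos : (0:ℝ) < b ^ j := pow_pos (lt_trans one_pos hb) j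
  have hMdiff : |Mn x - Mn y| ≤ β * b ^ j := by
    rw [abs_le]
    constructor <;> nlinarith [hxlo, hxhi, hylo, hyhi]
  apply Mn_le
  intro l
  have hco : (x - y) l = x l - y l := rfl
  rw [hco]
  have h5x := hx.2.2.2.2 l
  have h5y := hy.2.2.2.2 l
  have habound : |(a l : ℝ)| ≤ 1/β + 1 := by
    have := acoef_abs_le hβ hx1 l
    rw [hax l] at this
    exact this
  have hMxv : sg s * x i = Mn x := (cell_canon hb hβ hx).1.symm
  have hMyv : sg s * y i = Mn y := (cell_canon hb hβ hy).1.symm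
  rw [hMxv] at h5x
  rw [hMyv] at h5y
  have key : ∀ u v Mu Mv : ℝ, β * a l * Mu ≤ u → u < β * (a l + 1) * Mu →
      β * a l * Mv ≤ v → v < β * (a l + 1) * Mv → |Mu - Mv| ≤ β * b ^ j →
      Mu ≤ (1+β) * b ^ j → Mv ≤ (1+β) * b ^ j → u - v ≤ 3 * β * b ^ j := by
    intro u v Mu Mv h1 h2 h3 h4 h5 h6 h7
    have e1 : u - v < β * (a l + 1) * Mu - β * a l * Mv := by linarith
    have e2 : β * (a l + 1) * Mu - β * a l * Mv = β * a l * (Mu - Mv) + β * Mu := by ring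
    have e3 : β * a l * (Mu - Mv) ≤ β * |(a l : ℝ)| * |Mu - Mv| := by
      calc β * a l * (Mu - Mv) ≤ |β * a l * (Mu - Mv)| := le_abs_self _
        _ = β * |(a l : ℝ)| * |Mu - Mv| := by
            rw [abs_mul, abs_mul, abs_of_pos hβ]
    have e4 : β * |(a l : ℝ)| * |Mu - Mv| ≤ β * (1/β + 1) * (β * b ^ j) := by
      apply mul_le_mul
      · apply mul_le_mul_of_nonneg_left habound hβ.le
      · exact h5
      · exact abs_nonneg _
      · positivity
    have e5 : β * (1/β + 1) * (β * b ^ j) = (1 + β) * (β * b ^ j) := by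
      field_simp
    have e6 : β * Mu ≤ β * ((1+β) * b ^ j) := mul_le_mul_of_nonneg_left h6 hβ.le
    nlinarith [hbjpos]
  have hup : x l - y l ≤ 3 * β * b ^ j :=
    key (x l) (y l) (Mn x) (Mn y) h5x.1 h5x.2 h5y.1 h5y.2 hMdiff
      (by linarith [hxhi, hbj1.ge] : Mn x ≤ (1+β) * b ^ j)
      (by linarith [hyhi, hbj1.ge] : Mn y ≤ (1+β) * b ^ j)
  have hdn : y l - x l ≤ 3 * β * b ^ j :=
    key (y l) (x l) (Mn y) (Mn x) h5y.1 h5y.2 h5x.1 h5x.2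
      (by rwa [abs_sub_comm] at hMdiff)
      (by linarith [hyhi, hbj1.ge]) (by linarith [hxhi, hbj1.ge])
  rw [abs_le]
  constructor <;> linarith

lemma sort3 {α : Type*} (g : α → ℕ) (p₁ p₂ p₃ : α)
    (h12 : g p₁ ≠ g p₂) (h13 : g p₁ ≠ g p₃) (h23 : g p₂ ≠ g p₃) :
    ∃ u v w, u ∈ ({p₁, p₂, p₃} : Set α) ∧ v ∈ ({p₁, p₂, p₃} : Set α) ∧
      w ∈ ({p₁, p₂, p₃} : Set α) ∧ g u < g v ∧ g v < g w := by
  rcases Nat.lt_trichotomy (g p₁) (g p₂) with a | a | a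
  · rcases Nat.lt_trichotomy (g p₂) (g p₃) with c | c | c
    · exact ⟨p₁, p₂, p₃, by simp, by simp, by simp, a, c⟩
    · exact absurd c h23
    · rcases Nat.lt_trichotomy (g p₁) (g p₃) with e | e | e
      · exact ⟨p₁, p₃, p₂, by simp, by simp, by simp, e, c⟩
      · exact absurd e h13
      · exact ⟨p₃, p₁, p₂, by simp, by simp, by simp, e, a⟩
  · exact absurd a h12
  · rcases Nat.lt_trichotomy (g p₁) (g p₃) with c | c | c
    · exact ⟨p₂, p₁, p₃, by simp, by simp, by simp, a, c⟩
    · exact absurd c h13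
    · rcases Nat.lt_trichotomy (g p₂) (g p₃) with e | e | e
      · exact ⟨p₂, p₃, p₁, by simp, by simp, by simp, e, c⟩
      · exact absurd e h23
      · exact ⟨p₃, p₂, p₁, by simp, by simp, by simp, e, a⟩

lemma shell_gap {Q : ℕ} (hQ : 2 ≤ Q) {jx jy : ℕ} (hne : jx ≠ jy)
    (hcast : ((jx : ℕ) : ZMod Q) = ((jy : ℕ) : ZMod Q)) :
    jx + Q ≤ jy ∨ jy + Q ≤ jx := by
  have hmod : jx % Q = jy % Q := (ZMod.natCast_eq_natCast_iff _ _ _).mp hcast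
  have hdvd : (Q:ℤ) ∣ (jy : ℤ) - (jx : ℤ) := Nat.modEq_iff_dvd.mp hmod
  obtain ⟨k, hk⟩ := hdvd
  rcases eq_or_ne k 0 with rfl | hk0
  · simp at hk
    omega
  · have h1 : (1:ℤ) ≤ |k| := Int.one_le_abs (by exact_mod_cast hk0)
    have h2 : ((Q:ℤ)) ≤ |(jy:ℤ) - (jx:ℤ)| := by
      rw [hk, abs_mul, abs_of_nonneg (by positivity : (0:ℤ) ≤ (Q:ℤ))]
      nlinarith
    rcases le_or_gt (jx:ℤ) (jy:ℤ) with h | h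
    · left
      have : (jx:ℤ) + Q ≤ jy := by
        rw [abs_of_nonneg (by linarith : (0:ℤ) ≤ (jy:ℤ) - jx)] at h2
        linarith
      exact_mod_cast this
    · right
      have : (jy:ℤ) + Q ≤ jx := by
        rw [abs_of_nonpos (by linarith : (jy:ℤ) - jx ≤ 0)] at h2
        linarith
      exact_mod_cast this

end KillSec

noncomputable section MainKill
variable {d : ℕ} [Nonempty (Fin d)]

lemma colour_shell_cast_eq {b β : ℝ} {Q A : ℕ} {x y : EuclideanSpace ℝ (Fin d)}
    (hx1 : 1 ≤ Mn x) (hy1 : 1 ≤ Mn y)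
    (hc : colour b β Q A x = colour b β Q A y) :
    ((shellIdx b x : ℕ) : ZMod Q) = ((shellIdx b y : ℕ) : ZMod Q) := by
  rw [colour, colour, if_neg (not_lt.mpr hx1), if_neg (not_lt.mpr hy1)] at hc
  have hc' := Option.some_injective _ hc
  exact congrArg Prod.fst hc'

lemma colour_eq_of_data_eq {b β : ℝ} {Q A : ℕ} {x y : EuclideanSpace ℝ (Fin d)}
    (hx1 : 1 ≤ Mn x) (hy1 : 1 ≤ Mn y) (hsh : shellIdx b x = shellIdx b y)
    (him : imax x = imax y) (hsg : sgn x = sgn y) (hac : ∀ l, acoef β x l = acoef β y l) :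
    colour b β Q A x = colour b β Q A y := by
  have hfun : (fun l => ((acoef β x l : ZMod A))) = (fun l => ((acoef β y l : ZMod A))) :=
    funext fun l => by rw [hac l]
  rw [colour, colour, if_neg (not_lt.mpr hx1), if_neg (not_lt.mpr hy1), hsh, him, hsg, hfun]

lemma mono_copy_colour {b β : ℝ} {Q Q₀ A : ℕ} {m₁ m₂ r : ℝ}
    (hb : 1 < b) (hbβ : b = 1 + β) (hβ : 0 < β) (hβ2 : β ≤ 1/2)
    (hQ : 2 ≤ Q) (hQQ : Q = Q₀ + 1) (hQa : (2:ℝ) ≤ b ^ Q₀)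
    (hQb : 4 * Real.sqrt d * m₂ < b ^ Q₀ * m₁)
    (hA : 2/β + 2 < (A:ℝ))
    (hK1 : 6 * Real.sqrt d * β * m₂ < m₁)
    (hm₁ : 0 < m₁) (hr : 0 < r)
    {T : Set (EuclideanSpace ℝ (Fin d))} (hTfin : T.Finite)
    (hdist : ∀ t ∈ T, ∀ t' ∈ T, t ≠ t' → r * m₁ ≤ dist t t' ∧ dist t t' ≤ r * m₂)
    {t₁ t₂ t₃ : EuclideanSpace ℝ (Fin d)} (ht₁ : t₁ ∈ T) (ht₂ : t₂ ∈ T) (ht₃ : t₃ ∈ T)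
    (h12 : t₁ ≠ t₂) (h13 : t₁ ≠ t₃) (h23 : t₂ ≠ t₃)
    {c₀ : Option (ZMod Q × Fin d × Bool × (Fin d → ZMod A))}
    (hmono : ∀ t ∈ T, colour b β Q A t = c₀)
    {z : EuclideanSpace ℝ (Fin d)} (hz : z ∈ convexHull ℝ T) :
    colour b β Q A z = c₀ := by
  have hsd1 : (1:ℝ) ≤ Real.sqrt d := by
    rw [show (1:ℝ) = Real.sqrt 1 by simp]
    apply Real.sqrt_le_sqrt
    have : 0 < d := (Classical.arbitrary (Fin d)).pos
    exact_mod_cast this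
  by_cases hcent : ∃ t ∈ T, Mn t < 1
  · obtain ⟨t0, ht0, ht0c⟩ := hcent
    have hc0 : c₀ = none := by
      rw [← hmono t0 ht0, colour_eq_none_iff]
      exact ht0c
    have hsub : T ⊆ {x : EuclideanSpace ℝ (Fin d) | Mn x < 1} := by
      intro t ht
      have : colour b β Q A t = none := by rw [hmono t ht, hc0]
      exact colour_eq_none_iff.mp this
    have := convexHull_min hsub central_convex hz
    rw [hc0, colour_eq_none_iff]
    exact this
  · push_neg at hcent
    have hM1 : ∀ t ∈ T, 1 ≤ Mn t := hcent
    by_cases hsh : ∀ t ∈ T, ∀ t' ∈ T, shellIdx b t = shellIdx b t'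
    · -- all in one shell: one convex cell
      set CC := Cell b β (shellIdx b t₁) (imax t₁) (sgn t₁) (acoef β t₁) with hCC
      have hTC : T ⊆ CC := by
        intro t ht
        have hsame := colour_same_shell_data hb hβ hA (hM1 t ht) (hM1 t₁ ht₁)
          (hsh t ht t₁ ht₁) (by rw [hmono t ht, hmono t₁ ht₁])
        have hmem := canon_cell (β := β) hb hβ (hM1 t ht)
        rw [hsh t ht t₁ ht₁, hsame.1, hsame.2.1,
          (funext hsame.2.2 : acoef β t = acoef β t₁)] at hmem
        exact hmem
      have hzC : z ∈ CC := convexHull_min hTC (cell_convex _ _ _ _ _ _) hz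
      obtain ⟨hzM, hz1, hzsh, hzim, hzsg, hzac⟩ := cell_canon hb hβ hzC
      rw [← hmono t₁ ht₁]
      exact colour_eq_of_data_eq hz1 (hM1 t₁ ht₁) hzsh hzim hzsg hzac
    · -- two different shells occur
      push_neg at hsh
      obtain ⟨ta, hta, tb', htb', hnej⟩ := hsh
      set Tn := hTfin.toFinset with hTn
      have hmemTn : ∀ t, t ∈ Tn ↔ t ∈ T := fun t => Set.Finite.mem_toFinset hTfin
      have hTne : (Tn.image (shellIdx b)).Nonempty :=
        ⟨_, Finset.mem_image_of_mem _ ((hmemTn t₁).mpr ht₁)⟩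
      set J := (Tn.image (shellIdx b)).max' hTne with hJ
      have hJmem := Finset.max'_mem _ hTne
      rw [← hJ] at hJmem
      obtain ⟨tb, htbn, htbJ⟩ := Finset.mem_image.mp hJmem
      have htbT : tb ∈ T := (hmemTn tb).mp htbn
      have hle : ∀ t ∈ T, shellIdx b t ≤ J := fun t ht =>
        Finset.le_max' _ _ (Finset.mem_image_of_mem _ ((hmemTn t).mpr ht))
      have hexlt : ∃ t ∈ T, shellIdx b t < J := by
        rcases eq_or_ne (shellIdx b ta) J with h | h
        · refine ⟨tb', htb', lt_of_le_of_ne (hle tb' htb') ?_⟩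
          rw [← h]
          exact fun hcon => hnej hcon.symm
        · exact ⟨ta, hta, lt_of_le_of_ne (hle ta hta) h⟩
      obtain ⟨ts, htsT, htsJ⟩ := hexlt
      -- shell gap for ts vs tb
      have hgap : shellIdx b ts + Q ≤ J := by
        have hcast := colour_shell_cast_eq (b := b) (β := β) (Q := Q) (A := A)
          (hM1 ts htsT) (hM1 tb htbT)
          (by rw [hmono ts htsT, hmono tb htbT])
        rw [htbJ] at hcast
        rcases shell_gap hQ (Nat.ne_of_lt htsJ) hcast with h | h
        · exact h
        · omega
      -- b^J ≤ 2 r m₂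
      have hbpos : (0:ℝ) < b := lt_trans one_pos hb
      have htbne : tb ≠ ts := by
        intro h
        rw [h] at htbJ
        omega
      have hMtb : b ^ J ≤ Mn tb := by
        have := (shell_mem hb (hM1 tb htbT)).1
        rwa [htbJ] at this
      have hMts : Mn ts ≤ b ^ J / 2 := by
        have h1 : Mn ts < b ^ (shellIdx b ts + 1) := (shell_mem hb (hM1 ts htsT)).2
        have h2 : (b:ℝ) ^ (shellIdx b ts + 1) * b ^ Q₀ ≤ b ^ J := by
          rw [← pow_add]
          apply pow_le_pow_right₀ hb.le
          omega
        have h3 : (b:ℝ) ^ (shellIdx b ts + 1) * 2 ≤ b ^ J := by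
          calc (b:ℝ) ^ (shellIdx b ts + 1) * 2 ≤ b ^ (shellIdx b ts + 1) * b ^ Q₀ := by
                apply mul_le_mul_of_nonneg_left hQa (by positivity)
            _ ≤ b ^ J := h2
        have h4 : (0:ℝ) < b ^ (shellIdx b ts + 1) := by positivity
        rw [le_div_iff₀ (by norm_num : (0:ℝ) < 2)]
        nlinarith
      have hJ2rm : b ^ J ≤ 2 * (r * m₂) := by
        have hd1 : dist tb ts ≤ r * m₂ := (hdist tb htbT ts htsT htbne).2
        have hd2 : Mn tb - Mn ts ≤ dist tb ts := by
          rw [dist_eq_norm]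
          exact Mn_sub_le tb ts
        have : b ^ J - b ^ J / 2 ≤ dist tb ts := by linarith
        linarith
      by_cases hpair : ∃ x ∈ T, ∃ y ∈ T, x ≠ y ∧ shellIdx b x = shellIdx b y
      · obtain ⟨x, hxT, y, hyT, hxy, hshxy⟩ := hpair
        exfalso
        have hsame := colour_same_shell_data hb hβ hA (hM1 y hyT) (hM1 x hxT)
          (hshxy.symm) (by rw [hmono y hyT, hmono x hxT])
        have hxmem := canon_cell (β := β) hb hβ (hM1 x hxT)
        have hymem := canon_cell (β := β) hb hβ (hM1 y hyT)
        rw [hshxy.symm, hsame.1, hsame.2.1,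
          (funext hsame.2.2 : acoef β y = acoef β x)] at hymem
        have hdiam := cell_diam hb hβ hβ2 hbβ hxmem hymem
        have hdxy : dist x y ≤ 3 * Real.sqrt d * β * b ^ J := by
          calc dist x y = ‖x - y‖ := dist_eq_norm x y
            _ ≤ Real.sqrt d * Mn (x - y) := norm_le_sqrtd_Mn _
            _ ≤ Real.sqrt d * (3 * β * b ^ shellIdx b x) := by
                apply mul_le_mul_of_nonneg_left hdiam (by positivity)
            _ ≤ Real.sqrt d * (3 * β * b ^ J) := by
                apply mul_le_mul_of_nonneg_left _ (by positivity)
                apply mul_le_mul_of_nonneg_left _ (by positivity)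
                exact pow_le_pow_right₀ hb.le (hle x hxT)
            _ = 3 * Real.sqrt d * β * b ^ J := by ring
        have hlow : r * m₁ ≤ dist x y := (hdist x hxT y hyT hxy).1
        have hcontra : r * m₁ ≤ 3 * Real.sqrt d * β * (2 * (r * m₂)) := by
          calc r * m₁ ≤ 3 * Real.sqrt d * β * b ^ J := le_trans hlow hdxy
            _ ≤ 3 * Real.sqrt d * β * (2 * (r * m₂)) := by
                apply mul_le_mul_of_nonneg_left hJ2rm (by positivity)
        have : m₁ ≤ 6 * Real.sqrt d * β * m₂ := by nlinarith
        linarith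
      · push_neg at hpair
        exfalso
        -- pairwise distinct shells among t₁ t₂ t₃
        have hsh12 : shellIdx b t₁ ≠ shellIdx b t₂ := hpair t₁ ht₁ t₂ ht₂ h12
        have hsh13 : shellIdx b t₁ ≠ shellIdx b t₃ := hpair t₁ ht₁ t₃ ht₃ h13
        have hsh23 : shellIdx b t₂ ≠ shellIdx b t₃ := hpair t₂ ht₂ t₃ ht₃ h23
        obtain ⟨u, v, w, hu, hv, hw, huv, hvw⟩ := sort3 (shellIdx b) t₁ t₂ t₃ hsh12 hsh13 hsh23
        have hmemT : ∀ p ∈ ({t₁, t₂, t₃} : Set (EuclideanSpace ℝ (Fin d))), p ∈ T := by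
          intro p hp
          rcases hp with rfl | rfl | rfl
          exacts [ht₁, ht₂, ht₃]
        have huT := hmemT u hu
        have hvT := hmemT v hv
        have hwT := hmemT w hw
        have hunev : u ≠ v := fun h => absurd (congrArg (shellIdx b) h) (Nat.ne_of_lt huv)
        have hvnew : v ≠ w := fun h => absurd (congrArg (shellIdx b) h) (Nat.ne_of_lt hvw)
        -- gap between v and w
        have hgapvw : shellIdx b v + Q ≤ shellIdx b w := by
          have hcast := colour_shell_cast_eq (b := b) (β := β) (Q := Q) (A := A)
            (hM1 v hvT) (hM1 w hwT)
            (by rw [hmono v hvT, hmono w hwT])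
          rcases shell_gap hQ (Nat.ne_of_lt hvw) hcast with h | h
          · exact h
          · omega
        set X := (b:ℝ) ^ (shellIdx b v + 1) with hX
        have hXpos : 0 < X := by rw [hX]; positivity
        -- upper bound on dist u v
        have hMu : Mn u < X := by
          have h1 := (shell_mem hb (hM1 u huT)).2
          have h2 : (b:ℝ) ^ (shellIdx b u + 1) ≤ X := by
            rw [hX]
            apply pow_le_pow_right₀ hb.le
            omega
          linarith
        have hMv : Mn v < X := (shell_mem hb (hM1 v hvT)).2
        have hduv : dist u v ≤ 2 * Real.sqrt d * X := by
          calc dist u v ≤ ‖u‖ + ‖v‖ := dist_le_norm_add_norm u v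
            _ ≤ Real.sqrt d * Mn u + Real.sqrt d * Mn v :=
                add_le_add (norm_le_sqrtd_Mn u) (norm_le_sqrtd_Mn v)
            _ ≤ Real.sqrt d * X + Real.sqrt d * X := by
                have hsd0 : (0:ℝ) ≤ Real.sqrt d := by positivity
                exact add_le_add (mul_le_mul_of_nonneg_left hMu.le hsd0)
                  (mul_le_mul_of_nonneg_left hMv.le hsd0)
            _ = 2 * Real.sqrt d * X := by ring
        -- lower bound on dist v w
        have hMw : X * b ^ Q₀ ≤ Mn w := by
          have h1 := (shell_mem hb (hM1 w hwT)).1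
          have h2 : X * b ^ Q₀ ≤ (b:ℝ) ^ shellIdx b w := by
            rw [hX, ← pow_add]
            apply pow_le_pow_right₀ hb.le
            omega
          linarith
        have hdvw : X * b ^ Q₀ - X ≤ dist v w := by
          have h2 : Mn w - Mn v ≤ dist v w := by
            rw [dist_eq_norm, norm_sub_rev]
            exact Mn_sub_le w v
          nlinarith
        have hd1 : r * m₁ ≤ dist u v := (hdist u huT v hvT hunev).1
        have hd2 : dist v w ≤ r * m₂ := (hdist v hvT w hwT hvnew).2
        -- combine
        have hXQ : X * b ^ Q₀ / 2 ≤ r * m₂ := by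
          have : X * b ^ Q₀ - X ≥ X * b ^ Q₀ / 2 := by nlinarith [hQa, hXpos]
          linarith
        have hcon1 : r * m₁ * b ^ Q₀ ≤ 2 * Real.sqrt d * X * b ^ Q₀ := by
          apply mul_le_mul_of_nonneg_right (le_trans hd1 hduv) (by positivity)
        have hcon2 : 2 * Real.sqrt d * (X * b ^ Q₀) ≤ 2 * Real.sqrt d * (2 * (r * m₂)) := by
          apply mul_le_mul_of_nonneg_left _ (by positivity)
          linarith
        have : m₁ * b ^ Q₀ ≤ 4 * Real.sqrt d * m₂ := by nlinarith
        nlinarith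

end MainKill

end AUX

/-- If `S ⊆ ℝ^d` is finite with `|S| > 3` and `s₀ ∈ S` is not an
extreme point of `S`, then there is an AP-free finite colouring of `ℝ^d` with no
almost-monochromatic similar copy of `(S, s₀)`. -/
theorem no_am_similar_copy_nonextreme (d : ℕ) (S : Set (EuclideanSpace ℝ (Fin d)))
    (hfin : S.Finite) (hcard : 3 < S.ncard)
    (s₀ : EuclideanSpace ℝ (Fin d)) (hs₀ : s₀ ∈ S)
    (hconv : s₀ ∈ convexHull ℝ (S \ {s₀})) :
    ∃ (k : ℕ) (φ : EuclideanSpace ℝ (Fin d) → Fin k), APFree φ ∧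
      ¬ ∃ f, IsSim f ∧ AlmostMono φ (f '' S) (f s₀) := by
  classical
  -- dimension zero is impossible
  rcases Nat.eq_zero_or_pos d with rfl | hd
  · exfalso
    have hsub : S ⊆ {0} := fun x _ => Set.mem_singleton_iff.mpr (Subsingleton.elim x 0)
    have h1 : S.ncard ≤ ({0} : Set (EuclideanSpace ℝ (Fin 0))).ncard :=
      Set.ncard_le_ncard hsub (Set.finite_singleton 0)
    rw [Set.ncard_singleton] at h1
    omega
  haveI : Nonempty (Fin d) := ⟨⟨0, hd⟩⟩
  -- the punctured set
  set P : Set (EuclideanSpace ℝ (Fin d)) := S \ {s₀} with hPdef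
  have hPfin : P.Finite := hfin.subset Set.diff_subset
  have hP3 : 3 ≤ P.ncard := by
    rw [hPdef]
    have h := Set.ncard_diff_singleton_add_one hs₀ hfin
    omega
  set Pn := hPfin.toFinset with hPn
  have hPnmem : ∀ u, u ∈ Pn ↔ u ∈ P := fun u => hPfin.mem_toFinset
  have hcard3 : 3 ≤ Pn.card := by
    rwa [Set.ncard_eq_toFinset_card P hPfin] at hP3
  -- three distinct elements of P
  obtain ⟨u₁, hu₁⟩ := Finset.card_pos.mp (by omega : 0 < Pn.card)
  have hc2 : 0 < (Pn.erase u₁).card := by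
    have := Finset.card_erase_of_mem hu₁
    omega
  obtain ⟨u₂, hu₂⟩ := Finset.card_pos.mp hc2
  have hc1 : 0 < ((Pn.erase u₁).erase u₂).card := by
    have h1 := Finset.card_erase_of_mem hu₂
    have h2 := Finset.card_erase_of_mem hu₁
    omega
  obtain ⟨u₃, hu₃⟩ := Finset.card_pos.mp hc1
  have hu₂Pn : u₂ ∈ Pn := Finset.mem_of_mem_erase hu₂
  have hu₃Pn : u₃ ∈ Pn := Finset.mem_of_mem_erase (Finset.mem_of_mem_erase hu₃)
  have hne21 : u₂ ≠ u₁ := Finset.ne_of_mem_erase hu₂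
  have hne32 : u₃ ≠ u₂ := Finset.ne_of_mem_erase hu₃
  have hne31 : u₃ ≠ u₁ := Finset.ne_of_mem_erase (Finset.mem_of_mem_erase hu₃)
  have hu₁P : u₁ ∈ P := (hPnmem u₁).mp hu₁
  have hu₂P : u₂ ∈ P := (hPnmem u₂).mp hu₂Pn
  have hu₃P : u₃ ∈ P := (hPnmem u₃).mp hu₃Pn
  -- min and max distances
  set E := (Pn ×ˢ Pn).filter (fun p => p.1 ≠ p.2) with hE
  have hEne : E.Nonempty := by
    refine ⟨(u₁, u₂), Finset.mem_filter.mpr ⟨Finset.mem_product.mpr ⟨hu₁, hu₂Pn⟩, ?_⟩⟩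
    exact fun h => hne21 h.symm
  set m₁ := E.inf' hEne (fun p => dist p.1 p.2) with hm₁def
  set m₂ := E.sup' hEne (fun p => dist p.1 p.2) with hm₂def
  have hbound : ∀ u ∈ P, ∀ v ∈ P, u ≠ v → m₁ ≤ dist u v ∧ dist u v ≤ m₂ := by
    intro u hu v hv huv
    have hmem : (u, v) ∈ E := Finset.mem_filter.mpr
      ⟨Finset.mem_product.mpr ⟨(hPnmem u).mpr hu, (hPnmem v).mpr hv⟩, huv⟩
    have h1 := Finset.inf'_le (fun p : (EuclideanSpace ℝ (Fin d)) × (EuclideanSpace ℝ (Fin d)) => dist p.1 p.2) hmem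
    have h2 := Finset.le_sup' (fun p : (EuclideanSpace ℝ (Fin d)) × (EuclideanSpace ℝ (Fin d)) => dist p.1 p.2) hmem
    exact ⟨h1, h2⟩
  have hm₁pos : 0 < m₁ := by
    rw [hm₁def, Finset.lt_inf'_iff]
    intro p hp
    have := (Finset.mem_filter.mp hp).2
    exact dist_pos.mpr this
  have hm12 : m₁ ≤ m₂ := by
    obtain ⟨h1, h2⟩ := hbound u₁ hu₁P u₂ hu₂P (fun h => hne21 h.symm)
    linarith
  have hm₂pos : 0 < m₂ := lt_of_lt_of_le hm₁pos hm12
  -- parameters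
  set sd := Real.sqrt d with hsd
  have hsd1 : (1:ℝ) ≤ sd := by
    rw [hsd, show (1:ℝ) = Real.sqrt 1 by simp]
    apply Real.sqrt_le_sqrt
    exact_mod_cast hd
  have hsdpos : 0 < sd := lt_of_lt_of_le one_pos hsd1
  set β := m₁ / (9 * sd * m₂) with hβdef
  have hβ : 0 < β := by positivity
  have hβ9 : β * (9 * sd * m₂) = m₁ := by
    rw [hβdef]; field_simp
  have hβ2 : β ≤ 1/2 := by
    rw [hβdef, div_le_iff₀ (by positivity)]
    nlinarith
  have hK1 : 6 * sd * β * m₂ < m₁ := by nlinarith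
  set b := 1 + β with hbdef
  have hb : 1 < b := by rw [hbdef]; linarith
  -- Q
  obtain ⟨n₀, hn₀⟩ := pow_unbounded_of_one_lt (max 2 (4 * sd * m₂ / m₁)) hb
  have hQa : (2:ℝ) ≤ b ^ n₀ := le_of_lt (lt_of_le_of_lt (le_max_left _ _) hn₀)
  have hQb : 4 * sd * m₂ < b ^ n₀ * m₁ := by
    have h1 : 4 * sd * m₂ / m₁ < b ^ n₀ := lt_of_le_of_lt (le_max_right _ _) hn₀
    rw [div_lt_iff₀ hm₁pos] at h1
    linarith
  have hn₀1 : 1 ≤ n₀ := by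
    rcases Nat.eq_zero_or_pos n₀ with rfl | h
    · exfalso
      rw [pow_zero] at hQa
      linarith
    · exact h
  set Q := n₀ + 1 with hQdef
  have hQ2 : 2 ≤ Q := by omega
  -- A
  set A := ⌈2/β⌉₊ + 3 with hAdef
  have hA : 2/β + 2 < (A:ℝ) := by
    have := Nat.le_ceil (2/β)
    rw [hAdef]
    push_cast
    linarith
  haveI : NeZero Q := ⟨by omega⟩
  haveI : NeZero A := ⟨by omega⟩
  -- colouring
  set CT := Option (ZMod Q × Fin d × Bool × (Fin d → ZMod A)) with hCT
  set e : CT ≃ Fin (Fintype.card CT) := Fintype.equivFin CT with he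
  refine ⟨Fintype.card CT, fun x => e (colour b β Q A x), ?_, ?_⟩
  · -- AP-free
    rintro ⟨a, v, c, hv, hmono⟩
    apply apfree_colour hb hbdef hQ2 hv (c := e.symm c)
    intro n
    have := hmono n
    apply_fun e.symm at this
    simpa using this
  · -- no almost-monochromatic similar copy
    rintro ⟨f, hsim, ⟨⟨c, hc⟩, hnm⟩⟩
    obtain ⟨r, hr, hrd⟩ := hsim
    have hsim' : IsSim f := ⟨r, hr, hrd⟩
    have hinj : Function.Injective f := sim_injective hsim'
    set T : Set (EuclideanSpace ℝ (Fin d)) := f '' P with hT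
    have hTeq : f '' S \ {f s₀} = T := by
      rw [hT, hPdef, Set.image_diff hinj, Set.image_singleton]
    have hmono' : ∀ t ∈ T, colour b β Q A t = e.symm (c) := by
      intro t ht
      have := hc t (hTeq ▸ ht)
      apply_fun e.symm at this
      simpa using this
    have hTfin : T.Finite := hPfin.image f
    have hdistT : ∀ t ∈ T, ∀ t' ∈ T, t ≠ t' → r * m₁ ≤ dist t t' ∧ dist t t' ≤ r * m₂ := by
      rintro t ⟨u, hu, rfl⟩ t' ⟨u', hu', rfl⟩ htt
      have huu : u ≠ u' := fun h => htt (congrArg f h)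
      obtain ⟨h1, h2⟩ := hbound u hu u' hu' huu
      rw [hrd u u']
      constructor
      · exact mul_le_mul_of_nonneg_left h1 hr.le
      · exact mul_le_mul_of_nonneg_left h2 hr.le
    have hzconv : f s₀ ∈ convexHull ℝ T := sim_image_convexHull hsim' P hconv
    have hfinal : colour b β Q A (f s₀) = e.symm c := by
      apply mono_copy_colour hb hbdef hβ hβ2 hQ2 hQdef hQa hQb hA hK1 hm₁pos hr hTfin hdistT
        (Set.mem_image_of_mem f hu₁P) (Set.mem_image_of_mem f hu₂P)
        (Set.mem_image_of_mem f hu₃P)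
        (fun h => (hne21 (hinj h.symm)).elim)
        (fun h => (hne31 (hinj h.symm)).elim)
        (fun h => (hne32 (hinj h.symm)).elim)
        hmono' hzconv
    apply hnm
    refine ⟨c, ?_⟩
    intro x hx
    by_cases hxs : x = f s₀
    · rw [hxs]
      apply_fun e at hfinal
      simpa using hfinal
    · exact hc x ⟨hx, hxs⟩
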